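/- arXiv:2507.12342 — 2 statements merged into one kernel-verified Lean document; each statement's English description precedes it below -/
import Mathlib

section
/- Let a1, a2, a3 be positive odd integers, let δ2, δ3 ∈ {1, −1} with (δ2, δ3) ≠ (−1, −1), and let μ, α, β ∈ {0, 1} with μ + α + β ≤ 1. Set m1 = 2^μ·a1, m2 = δ2·2^α·a2, m3 = δ3·2^β·a3, and define u = (−1)^{η(a1)·η(a2) + η(a1)·η(a3) + η(a2)·η(a3)} · J(−1 | a1) · J(2^μ | a2·a3) · J(δ2·2^α | a1·a3) · J(δ3·2^β | a1·a2). Then u = 1 if and only if (m1, m2, m3) is ℚ₂-soluble, where ℚ₂ is the field of 2-adic numbers. -/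
/-- The conic `x² = m₁m₂ y² + m₁m₃ z²` has a nontrivial solution over `F`. -/
def Soluble (F : Type*) [Field F] (m1 m2 m3 : ℤ) : Prop :=
  ∃ x y z : F, ¬(x = 0 ∧ y = 0 ∧ z = 0) ∧
    x ^ 2 = ((m1 * m2 : ℤ) : F) * y ^ 2 + ((m1 * m3 : ℤ) : F) * z ^ 2

/-- `η(b) ∈ {0,1}` with `η(b) ≡ (b-1)/2 (mod 2)`, for a (positive) odd integer `b`. -/
def eta (b : ℕ) : ℕ := ((b - 1) / 2) % 2

def Sol2 (A B : ℤ) : Prop :=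
  ∃ x y z : ℚ_[2], ¬(x = 0 ∧ y = 0 ∧ z = 0) ∧
    x ^ 2 = ((A : ℤ) : ℚ_[2]) * y ^ 2 + ((B : ℤ) : ℚ_[2]) * z ^ 2

lemma soluble_iff (m1 m2 m3 : ℤ) : Soluble ℚ_[2] m1 m2 m3 ↔ Sol2 (m1*m2) (m1*m3) :=
  Iff.rfl

lemma two_norm : ‖(2 : ℤ_[2])‖ = 2⁻¹ := by
  have := @PadicInt.norm_p 2 ⟨Nat.prime_two⟩
  exact_mod_cast this

lemma isSquare_padic_of_emod8 (m : ℤ) (h : m % 8 = 1) : IsSquare ((m : ℚ_[2])) := by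
  have hs : ∃ z : ℤ_[2], z^2 = (m : ℤ_[2]) := by
    have hnorm : ‖(Polynomial.X^2 - Polynomial.C (m : ℤ_[2])).eval 1‖ <
        ‖(Polynomial.X^2 - Polynomial.C (m : ℤ_[2])).derivative.eval 1‖ ^ 2 := by
      obtain ⟨k, hk⟩ : ∃ k : ℤ, m = 8 * k + 1 := ⟨m / 8, by omega⟩
      simp only [Polynomial.derivative_sub, Polynomial.derivative_pow, Polynomial.derivative_X,
        Polynomial.derivative_C, Polynomial.eval_sub, Polynomial.eval_pow, Polynomial.eval_X,
        Polynomial.eval_C, Polynomial.eval_mul, Polynomial.eval_one, sub_zero, one_pow, mul_one,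
        Polynomial.eval_natCast]
      have hne : (1 - (m:ℤ_[2])) = 2^3 * (-k) := by
        have : (m : ℤ_[2]) = 8*k+1 := by exact_mod_cast congrArg (Int.cast : ℤ → ℤ_[2]) hk
        rw [this]; ring
      have h8 : ‖(1 - (m:ℤ_[2]))‖ ≤ (2:ℝ)⁻¹^3 := by
        rw [hne, norm_mul, norm_pow, two_norm]
        calc (2:ℝ)⁻¹^3 * ‖(-k : ℤ_[2])‖ ≤ (2:ℝ)⁻¹^3 * 1 := by
              gcongr; exact PadicInt.norm_le_one _
          _ = (2:ℝ)⁻¹^3 := mul_one _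
      have h2c : ((2:ℕ) : ℤ_[2]) = (2 : ℤ_[2]) := by norm_num
      rw [h2c, two_norm]
      calc ‖1 - (m:ℤ_[2])‖ ≤ (2:ℝ)⁻¹^3 := h8
        _ < (2:ℝ)⁻¹^2 := by norm_num
    obtain ⟨z, hz, -⟩ := hensels_lemma hnorm
    refine ⟨z, ?_⟩
    simpa only [Polynomial.coe_aeval_eq_eval, Polynomial.eval_sub, Polynomial.eval_pow, Polynomial.eval_X, Polynomial.eval_C,
      sub_eq_zero] using hz
  obtain ⟨z, hz⟩ := hs
  refine ⟨(z : ℚ_[2]), ?_⟩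
  have : ((z^2 : ℤ_[2]) : ℚ_[2]) = ((m : ℤ_[2]) : ℚ_[2]) := by exact_mod_cast congrArg _ hz
  push_cast at this
  rw [← this]; ring

lemma isSquare_padic_pow (k : ℕ) (m : ℤ) (h : m % 8 = 1) :
    IsSquare ((2^(2*k) * m : ℤ) : ℚ_[2]) := by
  obtain ⟨r, hr⟩ := isSquare_padic_of_emod8 m h
  refine ⟨2^k * r, ?_⟩
  push_cast
  rw [hr]; ring

lemma sol2_mono (A B A' B' : ℤ) (hA : A ≠ 0) (hB : B ≠ 0) (hA' : A' ≠ 0) (hB' : B' ≠ 0)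
    (hsA : IsSquare (((A*A' : ℤ)) : ℚ_[2])) (hsB : IsSquare (((B*B' : ℤ)) : ℚ_[2])) :
    Sol2 A B → Sol2 A' B' := by
  rintro ⟨x, y, z, hnt, he⟩
  obtain ⟨s, hs⟩ := hsA
  obtain ⟨t, ht⟩ := hsB
  have hA0 : ((A : ℤ) : ℚ_[2]) ≠ 0 := by exact_mod_cast hA
  have hB0 : ((B : ℤ) : ℚ_[2]) ≠ 0 := by exact_mod_cast hB
  have hA'0 : ((A' : ℤ) : ℚ_[2]) ≠ 0 := by exact_mod_cast hA'
  have hB'0 : ((B' : ℤ) : ℚ_[2]) ≠ 0 := by exact_mod_cast hB'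
  have hs0 : s ≠ 0 := by
    intro h0; rw [h0, mul_zero] at hs
    push_cast at hs
    exact mul_ne_zero hA0 hA'0 hs
  have ht0 : t ≠ 0 := by
    intro h0; rw [h0, mul_zero] at ht
    push_cast at ht
    exact mul_ne_zero hB0 hB'0 ht
  refine ⟨x, (A : ℚ_[2]) * y / s, (B : ℚ_[2]) * z / t, ?_, ?_⟩
  · rintro ⟨hx, hy, hz⟩
    apply hnt
    refine ⟨hx, ?_, ?_⟩
    · simp only [div_eq_zero_iff, mul_eq_zero] at hy
      rcases hy with (h | h) | h
      · exact absurd h hA0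
      · exact h
      · exact absurd h hs0
    · simp only [div_eq_zero_iff, mul_eq_zero] at hz
      rcases hz with (h | h) | h
      · exact absurd h hB0
      · exact h
      · exact absurd h ht0
  · push_cast at hs ht he ⊢
    field_simp
    rw [he]
    ring_nf
    rw [show (s:ℚ_[2])*s = s^2 by ring] at hs
    rw [show (t:ℚ_[2])*t = t^2 by ring] at ht
    field_simp [← hs, ← ht]
    linear_combination (-(t^2*(A:ℚ_[2])*y^2)) * hs + (-(s^2*(B:ℚ_[2])*z^2)) * ht

lemma sol2_congr (A B A' B' : ℤ) (hA : A ≠ 0) (hB : B ≠ 0) (hA' : A' ≠ 0) (hB' : B' ≠ 0)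
    (hsA : IsSquare (((A*A' : ℤ)) : ℚ_[2])) (hsB : IsSquare (((B*B' : ℤ)) : ℚ_[2])) :
    Sol2 A B ↔ Sol2 A' B' := by
  constructor
  · exact sol2_mono A B A' B' hA hB hA' hB' hsA hsB
  · exact sol2_mono A' B' A B hA' hB' hA hB (by rw [mul_comm A' A]; exact hsA)
      (by rw [mul_comm B' B]; exact hsB)

lemma emod8_one_of_odd (s : ℤ) (hs : s % 2 = 1) : (s * (s % 8)) % 8 = 1 := by
  have h : s % 8 = 1 ∨ s % 8 = 3 ∨ s % 8 = 5 ∨ s % 8 = 7 := by omega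
  rcases h with h | h | h | h <;> rw [h] <;> omega

lemma sol2_canon (E F : ℕ) (s t : ℤ) (hs : s % 2 = 1) (ht : t % 2 = 1) :
    Sol2 (2^E * s) (2^F * t) ↔ Sol2 (2^E * (s % 8)) (2^F * (t % 8)) := by
  have hs0 : s ≠ 0 := by omega
  have ht0 : t ≠ 0 := by omega
  have hs8 : s % 8 ≠ 0 := by omega
  have ht8 : t % 8 ≠ 0 := by omega
  refine sol2_congr _ _ _ _ (mul_ne_zero (by positivity) hs0) (mul_ne_zero (by positivity) ht0)
    (mul_ne_zero (by positivity) hs8) (mul_ne_zero (by positivity) ht8) ?_ ?_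
  · have he : (2^E * s) * (2^E * (s % 8)) = 2^(2*E) * (s * (s % 8)) := by ring
    rw [he]
    exact isSquare_padic_pow E _ (emod8_one_of_odd s hs)
  · have he : (2^F * t) * (2^F * (t % 8)) = 2^(2*F) * (t * (t % 8)) := by ring
    rw [he]
    exact isSquare_padic_pow F _ (emod8_one_of_odd t ht)

lemma sol2_of_witness (A B y z : ℤ) (k : ℕ) (m : ℤ) (hm : m % 8 = 1)
    (hw : A*y^2 + B*z^2 = 2^(2*k)*m) : Sol2 A B := by
  obtain ⟨r, hr⟩ := isSquare_padic_pow k m hm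
  have hm0 : (2^(2*k)*m : ℤ) ≠ 0 := by
    apply mul_ne_zero (by positivity); omega
  refine ⟨r, (y : ℚ_[2]), (z : ℚ_[2]), ?_, ?_⟩
  · rintro ⟨hx, -, -⟩
    rw [hx, mul_zero] at hr
    exact hm0 (by exact_mod_cast hr)
  · have h2 : ((A*y^2 + B*z^2 : ℤ) : ℚ_[2]) = ((2^(2*k)*m : ℤ) : ℚ_[2]) :=
      congrArg _ hw
    push_cast at h2 hr ⊢
    rw [sq, ← hr]
    exact h2.symm

lemma sol2_nosol_aux (A B : ℤ) (x y z q : ℚ_[2]) (hq : q ≠ 0)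
    (h1 : ‖x‖ ≤ ‖q‖) (h2 : ‖y‖ ≤ ‖q‖) (h3 : ‖z‖ ≤ ‖q‖)
    (hor : q = x ∨ q = y ∨ q = z)
    (he : x ^ 2 = ((A : ℤ) : ℚ_[2]) * y ^ 2 + ((B : ℤ) : ℚ_[2]) * z ^ 2) :
    ∃ X Y Z : ℤ_[2], (IsUnit X ∨ IsUnit Y ∨ IsUnit Z) ∧
      X^2 = (A : ℤ_[2]) * Y^2 + (B : ℤ_[2]) * Z^2 := by
  have hqn : 0 < ‖q‖ := norm_pos_iff.mpr hq
  have hx1 : ‖x/q‖ ≤ 1 := by rw [norm_div, div_le_one hqn]; exact h1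
  have hy1 : ‖y/q‖ ≤ 1 := by rw [norm_div, div_le_one hqn]; exact h2
  have hz1 : ‖z/q‖ ≤ 1 := by rw [norm_div, div_le_one hqn]; exact h3
  set X : ℤ_[2] := ⟨x/q, hx1⟩ with hX
  set Y : ℤ_[2] := ⟨y/q, hy1⟩ with hY
  set Z : ℤ_[2] := ⟨z/q, hz1⟩ with hZ
  have key : ∀ (W : ℤ_[2]) (w : ℚ_[2]), (W : ℚ_[2]) = w/q → q = w → IsUnit W := by
    rintro W w hWw rfl
    rw [PadicInt.isUnit_iff, PadicInt.norm_def, hWw, div_self hq, norm_one]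
  refine ⟨X, Y, Z, ?_, ?_⟩
  · rcases hor with h | h | h
    · exact Or.inl (key X x rfl h)
    · exact Or.inr (Or.inl (key Y y rfl h))
    · exact Or.inr (Or.inr (key Z z rfl h))
  · apply PadicInt.ext
    push_cast
    have hXx : (X : ℚ_[2]) = x/q := rfl
    have hYy : (Y : ℚ_[2]) = y/q := rfl
    have hZz : (Z : ℚ_[2]) = z/q := rfl
    simp only [hXx, hYy, hZz]
    field_simp
    rw [he]

lemma sol2_nosol (A B : ℤ)
    (h : ∀ x y z : ZMod (2^4), (x.val % 2 = 1 ∨ y.val % 2 = 1 ∨ z.val % 2 = 1) →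
      x^2 ≠ (A : ZMod (2^4))*y^2 + (B : ZMod (2^4))*z^2) : ¬ Sol2 A B := by
  have hval : ∀ u : ZMod (2^4), IsUnit u → u.val % 2 = 1 := by decide
  rintro ⟨x, y, z, hnt, he⟩
  have hmax : ∃ q : ℚ_[2], q ≠ 0 ∧ ‖x‖ ≤ ‖q‖ ∧ ‖y‖ ≤ ‖q‖ ∧ ‖z‖ ≤ ‖q‖ ∧
      (q = x ∨ q = y ∨ q = z) := by
    have hnz : x ≠ 0 ∨ y ≠ 0 ∨ z ≠ 0 := by tauto
    by_cases h1 : ‖y‖ ≤ ‖x‖ ∧ ‖z‖ ≤ ‖x‖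
    · refine ⟨x, ?_, le_refl _, h1.1, h1.2, Or.inl rfl⟩
      intro h0
      rw [h0] at h1
      simp only [norm_zero] at h1
      have hy : y = 0 := norm_le_zero_iff.mp h1.1
      have hz : z = 0 := norm_le_zero_iff.mp h1.2
      exact hnt ⟨h0, hy, hz⟩
    · push_neg at h1
      by_cases h2 : ‖z‖ ≤ ‖y‖
      · have hxy : ‖x‖ ≤ ‖y‖ := by
          rcases lt_or_ge ‖x‖ ‖y‖ with h | h
          · exact le_of_lt h
          · exact le_trans (le_of_lt (h1 h)) h2
        refine ⟨y, ?_, hxy, le_refl _, h2, Or.inr (Or.inl rfl)⟩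
        intro h0
        rw [h0, norm_zero] at hxy h2
        exact hnt ⟨norm_le_zero_iff.mp hxy, h0, norm_le_zero_iff.mp h2⟩
      · push_neg at h2
        have hyz : ‖y‖ ≤ ‖z‖ := le_of_lt h2
        have hxz : ‖x‖ ≤ ‖z‖ := by
          rcases lt_or_ge ‖x‖ ‖y‖ with h | h
          · exact le_trans (le_of_lt h) hyz
          · exact le_trans (le_of_lt (h1 h)) (le_refl _)
        refine ⟨z, ?_, hxz, hyz, le_refl _, Or.inr (Or.inr rfl)⟩
        intro h0
        rw [h0, norm_zero] at hxz hyz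
        exact hnt ⟨norm_le_zero_iff.mp hxz, norm_le_zero_iff.mp hyz, h0⟩
  obtain ⟨q, hq, hx, hy, hz, hor⟩ := hmax
  obtain ⟨X, Y, Z, hu, heq⟩ := sol2_nosol_aux A B x y z q hq hx hy hz hor he
  have := congrArg (PadicInt.toZModPow 4) heq
  simp only [map_pow, map_add, map_mul, map_intCast] at this
  refine h _ _ _ ?_ this
  rcases hu with h' | h' | h'
  · exact Or.inl (hval _ (h'.map _))
  · exact Or.inr (Or.inl (hval _ (h'.map _)))
  · exact Or.inr (Or.inr (hval _ (h'.map _)))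


def hb (E F : ℕ) (c d : ℤ) : Bool :=
  decide ((((c-1)/2 * ((d-1)/2) + (E : ℤ) * ((d^2-1)/8) + (F : ℤ) * ((c^2-1)/8)) % 2 = 0))

set_option maxHeartbeats 2000000 in
lemma table (E F : ℕ) (hE : E ≤ 1) (hF : F ≤ 1) (c d : ℤ)
    (hc : c = 1 ∨ c = 3 ∨ c = 5 ∨ c = 7) (hd : d = 1 ∨ d = 3 ∨ d = 5 ∨ d = 7) :
    (Sol2 (2^E * c) (2^F * d) ↔ hb E F c d = true) := by
  interval_cases E <;> interval_cases F <;>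
    rcases hc with rfl | rfl | rfl | rfl <;> rcases hd with rfl | rfl | rfl | rfl
  · exact iff_of_true (sol2_of_witness _ _ 0 1 0 1 (by norm_num) (by norm_num)) (by decide)
  · exact iff_of_true (sol2_of_witness _ _ 1 0 0 1 (by norm_num) (by norm_num)) (by decide)
  · exact iff_of_true (sol2_of_witness _ _ 1 0 0 1 (by norm_num) (by norm_num)) (by decide)
  · exact iff_of_true (sol2_of_witness _ _ 1 0 0 1 (by norm_num) (by norm_num)) (by decide)
  · exact iff_of_true (sol2_of_witness _ _ 0 1 0 1 (by norm_num) (by norm_num)) (by decide)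
  · exact iff_of_false (sol2_nosol _ _ (by decide)) (by decide)
  · exact iff_of_true (sol2_of_witness _ _ 2 1 0 17 (by norm_num) (by norm_num)) (by decide)
  · exact iff_of_false (sol2_nosol _ _ (by decide)) (by decide)
  · exact iff_of_true (sol2_of_witness _ _ 0 1 0 1 (by norm_num) (by norm_num)) (by decide)
  · exact iff_of_true (sol2_of_witness _ _ 1 2 0 17 (by norm_num) (by norm_num)) (by decide)
  · exact iff_of_true (sol2_of_witness _ _ 1 2 0 25 (by norm_num) (by norm_num)) (by decide)
  · exact iff_of_true (sol2_of_witness _ _ 1 2 0 33 (by norm_num) (by norm_num)) (by decide)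
  · exact iff_of_true (sol2_of_witness _ _ 0 1 0 1 (by norm_num) (by norm_num)) (by decide)
  · exact iff_of_false (sol2_nosol _ _ (by decide)) (by decide)
  · exact iff_of_true (sol2_of_witness _ _ 1 5 1 33 (by norm_num) (by norm_num)) (by decide)
  · exact iff_of_false (sol2_nosol _ _ (by decide)) (by decide)
  · exact iff_of_true (sol2_of_witness _ _ 1 0 0 1 (by norm_num) (by norm_num)) (by decide)
  · exact iff_of_true (sol2_of_witness _ _ 1 0 0 1 (by norm_num) (by norm_num)) (by decide)
  · exact iff_of_true (sol2_of_witness _ _ 1 0 0 1 (by norm_num) (by norm_num)) (by decide)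
  · exact iff_of_true (sol2_of_witness _ _ 1 0 0 1 (by norm_num) (by norm_num)) (by decide)
  · exact iff_of_false (sol2_nosol _ _ (by decide)) (by decide)
  · exact iff_of_true (sol2_of_witness _ _ 1 1 0 9 (by norm_num) (by norm_num)) (by decide)
  · exact iff_of_false (sol2_nosol _ _ (by decide)) (by decide)
  · exact iff_of_true (sol2_of_witness _ _ 1 1 0 17 (by norm_num) (by norm_num)) (by decide)
  · exact iff_of_false (sol2_nosol _ _ (by decide)) (by decide)
  · exact iff_of_false (sol2_nosol _ _ (by decide)) (by decide)
  · exact iff_of_false (sol2_nosol _ _ (by decide)) (by decide)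
  · exact iff_of_false (sol2_nosol _ _ (by decide)) (by decide)
  · exact iff_of_true (sol2_of_witness _ _ 1 1 0 9 (by norm_num) (by norm_num)) (by decide)
  · exact iff_of_false (sol2_nosol _ _ (by decide)) (by decide)
  · exact iff_of_true (sol2_of_witness _ _ 1 1 0 17 (by norm_num) (by norm_num)) (by decide)
  · exact iff_of_false (sol2_nosol _ _ (by decide)) (by decide)
  · exact iff_of_true (sol2_of_witness _ _ 0 1 0 1 (by norm_num) (by norm_num)) (by decide)
  · exact iff_of_false (sol2_nosol _ _ (by decide)) (by decide)
  · exact iff_of_false (sol2_nosol _ _ (by decide)) (by decide)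
  · exact iff_of_true (sol2_of_witness _ _ 1 1 0 9 (by norm_num) (by norm_num)) (by decide)
  · exact iff_of_true (sol2_of_witness _ _ 0 1 0 1 (by norm_num) (by norm_num)) (by decide)
  · exact iff_of_true (sol2_of_witness _ _ 1 1 0 9 (by norm_num) (by norm_num)) (by decide)
  · exact iff_of_false (sol2_nosol _ _ (by decide)) (by decide)
  · exact iff_of_false (sol2_nosol _ _ (by decide)) (by decide)
  · exact iff_of_true (sol2_of_witness _ _ 0 1 0 1 (by norm_num) (by norm_num)) (by decide)
  · exact iff_of_false (sol2_nosol _ _ (by decide)) (by decide)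
  · exact iff_of_false (sol2_nosol _ _ (by decide)) (by decide)
  · exact iff_of_true (sol2_of_witness _ _ 1 1 0 17 (by norm_num) (by norm_num)) (by decide)
  · exact iff_of_true (sol2_of_witness _ _ 0 1 0 1 (by norm_num) (by norm_num)) (by decide)
  · exact iff_of_true (sol2_of_witness _ _ 1 1 0 17 (by norm_num) (by norm_num)) (by decide)
  · exact iff_of_false (sol2_nosol _ _ (by decide)) (by decide)
  · exact iff_of_false (sol2_nosol _ _ (by decide)) (by decide)
  · exact iff_of_true (sol2_of_witness _ _ 1 1 1 1 (by norm_num) (by norm_num)) (by decide)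
  · exact iff_of_false (sol2_nosol _ _ (by decide)) (by decide)
  · exact iff_of_false (sol2_nosol _ _ (by decide)) (by decide)
  · exact iff_of_true (sol2_of_witness _ _ 1 1 2 1 (by norm_num) (by norm_num)) (by decide)
  · exact iff_of_false (sol2_nosol _ _ (by decide)) (by decide)
  · exact iff_of_false (sol2_nosol _ _ (by decide)) (by decide)
  · exact iff_of_true (sol2_of_witness _ _ 1 1 2 1 (by norm_num) (by norm_num)) (by decide)
  · exact iff_of_true (sol2_of_witness _ _ 1 3 1 33 (by norm_num) (by norm_num)) (by decide)
  · exact iff_of_false (sol2_nosol _ _ (by decide)) (by decide)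
  · exact iff_of_true (sol2_of_witness _ _ 1 1 2 1 (by norm_num) (by norm_num)) (by decide)
  · exact iff_of_true (sol2_of_witness _ _ 1 3 1 25 (by norm_num) (by norm_num)) (by decide)
  · exact iff_of_false (sol2_nosol _ _ (by decide)) (by decide)
  · exact iff_of_true (sol2_of_witness _ _ 1 1 2 1 (by norm_num) (by norm_num)) (by decide)
  · exact iff_of_true (sol2_of_witness _ _ 1 3 1 17 (by norm_num) (by norm_num)) (by decide)
  · exact iff_of_false (sol2_nosol _ _ (by decide)) (by decide)
  · exact iff_of_false (sol2_nosol _ _ (by decide)) (by decide)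

def c4 (r : ℕ) : ℤ := ZMod.χ₄ (r : ZMod 4)
def jt (μ r : ℕ) : ℤ := if μ = 0 then 1 else ZMod.χ₈ (r : ZMod 8)
def jd (d : ℤ) (α r : ℕ) : ℤ :=
  if d = 1 then (if α = 0 then 1 else ZMod.χ₈ (r : ZMod 8))
  else (if α = 0 then ZMod.χ₄ (r : ZMod 4) else ZMod.χ₈' (r : ZMod 8))

lemma eta_mod8 (a : ℕ) (h : a % 2 = 1) : eta a = eta (a % 8) := by unfold eta; omega

lemma chi4_cast (b : ℕ) : ZMod.χ₄ (b : ZMod 4) = ZMod.χ₄ ((b % 8 : ℕ) : ZMod 4) := by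
  congr 1
  rw [ZMod.natCast_eq_natCast_iff]
  unfold Nat.ModEq
  omega

lemma chi8_cast (b : ℕ) : ZMod.χ₈ (b : ZMod 8) = ZMod.χ₈ ((b % 8 : ℕ) : ZMod 8) := by
  congr 1
  rw [ZMod.natCast_eq_natCast_iff]
  unfold Nat.ModEq
  omega

lemma chi8'_cast (b : ℕ) : ZMod.χ₈' (b : ZMod 8) = ZMod.χ₈' ((b % 8 : ℕ) : ZMod 8) := by
  congr 1
  rw [ZMod.natCast_eq_natCast_iff]
  unfold Nat.ModEq
  omega

lemma jacobi_neg_one (b : ℕ) (hb : Odd b) : jacobiSym (-1) b = c4 (b % 8) := by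
  rw [jacobiSym.at_neg_one hb, c4, chi4_cast]

lemma jacobi_two (μ : ℕ) (hμ : μ ≤ 1) (b : ℕ) (hb : Odd b) :
    jacobiSym (2^μ) b = jt μ (b % 8) := by
  interval_cases μ
  · norm_num [jacobiSym.one_left, jt]
  · rw [pow_one, jacobiSym.at_two hb, chi8_cast]
    simp [jt]

lemma jacobi_delta (d : ℤ) (hd : d = 1 ∨ d = -1) (α : ℕ) (hα : α ≤ 1) (b : ℕ) (hb : Odd b) :
    jacobiSym (d * 2^α) b = jd d α (b % 8) := by
  rcases hd with rfl | rfl <;> interval_cases α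
  · norm_num [jacobiSym.one_left, jd]
  · rw [pow_one, one_mul, jacobiSym.at_two hb, chi8_cast]
    simp [jd]
  · rw [pow_zero, mul_one, jacobiSym.at_neg_one hb, chi4_cast]
    simp [jd]
  · rw [pow_one, show ((-1)*2 : ℤ) = -2 by norm_num, jacobiSym.at_neg_two hb, chi8'_cast]
    simp [jd]

lemma odd_prod (d : ℤ) (hd : d = 1 ∨ d = -1) (x y : ℕ) (hx : x % 2 = 1) (hy : y % 2 = 1) :
    (d * ((x:ℤ) * (y:ℤ))) % 2 = 1 := by
  have h1 : ((x:ℤ) * (y:ℤ)) % 2 = 1 := by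
    have h2 : (x:ℤ) % 2 = 1 := by omega
    have h3 : (y:ℤ) % 2 = 1 := by omega
    rw [Int.mul_emod, h2, h3]; norm_num
  rcases hd with rfl | rfl <;> omega

lemma emod8_prod (d : ℤ) (x y : ℕ) :
    (d * ((x:ℤ) * (y:ℤ))) % 8 = (d * (((x % 8 : ℕ) : ℤ) * ((y % 8 : ℕ) : ℤ))) % 8 := by
  have hx : ((x % 8 : ℕ) : ℤ) = (x : ℤ) % 8 := by push_cast; ring
  have hy : ((y % 8 : ℕ) : ℤ) = (y : ℤ) % 8 := by push_cast; ring
  rw [hx, hy, Int.mul_emod d, Int.mul_emod ((x:ℤ)), Int.mul_emod d ((x:ℤ)%8 * ((y:ℤ)%8)),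
    Int.mul_emod ((x:ℤ)%8), Int.emod_emod_of_dvd, Int.emod_emod_of_dvd] <;> norm_num

set_option maxHeartbeats 4000000 in
lemma key (d2 d3 : ℤ) (h2 : d2 = 1 ∨ d2 = -1) (h3 : d3 = 1 ∨ d3 = -1)
    (hd : ¬(d2 = -1 ∧ d3 = -1)) (μ α β : ℕ) (hμ : μ ≤ 1) (hα : α ≤ 1) (hβ : β ≤ 1)
    (hs : μ + α + β ≤ 1) :
    ∀ r1 r2 r3 : Fin 8, r1.val % 2 = 1 → r2.val % 2 = 1 → r3.val % 2 = 1 →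
    (((-1 : ℤ) ^ (eta r1.val * eta r2.val + eta r1.val * eta r3.val + eta r2.val * eta r3.val) *
        c4 r1.val * jt μ (r2.val * r3.val % 8) *
        jd d2 α (r1.val * r3.val % 8) *
        jd d3 β (r1.val * r2.val % 8)) = 1 ↔
      hb (μ+α) (μ+β) ((d2 * ((r1.val:ℤ) * (r2.val:ℤ))) % 8)
        ((d3 * ((r1.val:ℤ) * (r3.val:ℤ))) % 8) = true) := by
  rcases h2 with rfl | rfl <;> rcases h3 with rfl | rfl <;>
    interval_cases μ <;> interval_cases α <;> interval_cases β
  all_goals try omega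
  all_goals decide


theorem u_factor_eq_one_iff_two_adic_solubility
    (a1 a2 a3 : ℕ) (ha1 : 0 < a1) (ha2 : 0 < a2) (ha3 : 0 < a3)
    (hodd1 : Odd a1) (hodd2 : Odd a2) (hodd3 : Odd a3)
    (δ2 δ3 : ℤ) (hδ2 : δ2 = 1 ∨ δ2 = -1) (hδ3 : δ3 = 1 ∨ δ3 = -1)
    (hδ : ¬(δ2 = -1 ∧ δ3 = -1))
    (μ α β : ℕ) (hμ : μ ≤ 1) (hα : α ≤ 1) (hβ : β ≤ 1) (hsum : μ + α + β ≤ 1) :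
    ((-1 : ℤ) ^ (eta a1 * eta a2 + eta a1 * eta a3 + eta a2 * eta a3) *
        jacobiSym (-1) a1 * jacobiSym (2 ^ μ) (a2 * a3) *
        jacobiSym (δ2 * 2 ^ α) (a1 * a3) * jacobiSym (δ3 * 2 ^ β) (a1 * a2)) = 1 ↔
      Soluble ℚ_[2] (2 ^ μ * (a1 : ℤ)) (δ2 * 2 ^ α * (a2 : ℤ)) (δ3 * 2 ^ β * (a3 : ℤ)) := by
  have o1 : a1 % 2 = 1 := Nat.odd_iff.mp hodd1
  have o2 : a2 % 2 = 1 := Nat.odd_iff.mp hodd2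
  have o3 : a3 % 2 = 1 := Nat.odd_iff.mp hodd3
  rw [soluble_iff]
  have eA : (2^μ*(a1:ℤ)) * (δ2*2^α*(a2:ℤ)) = 2^(μ+α) * (δ2 * ((a1:ℤ)*(a2:ℤ))) := by ring
  have eB : (2^μ*(a1:ℤ)) * (δ3*2^β*(a3:ℤ)) = 2^(μ+β) * (δ3 * ((a1:ℤ)*(a3:ℤ))) := by ring
  rw [eA, eB, sol2_canon (μ+α) (μ+β) _ _ (odd_prod δ2 hδ2 a1 a2 o1 o2)
      (odd_prod δ3 hδ3 a1 a3 o1 o3),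
    emod8_prod δ2 a1 a2, emod8_prod δ3 a1 a3,
    table (μ+α) (μ+β) (by omega) (by omega) _ _
      (by have := odd_prod δ2 hδ2 (a1%8) (a2%8) (by omega) (by omega); omega)
      (by have := odd_prod δ3 hδ3 (a1%8) (a3%8) (by omega) (by omega); omega),
    jacobi_neg_one a1 hodd1, jacobi_two μ hμ (a2*a3) (hodd2.mul hodd3),
    jacobi_delta δ2 hδ2 α hα (a1*a3) (hodd1.mul hodd3),
    jacobi_delta δ3 hδ3 β hβ (a1*a2) (hodd1.mul hodd2),
    Nat.mul_mod a2 a3 8, Nat.mul_mod a1 a3 8, Nat.mul_mod a1 a2 8,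
    eta_mod8 a1 o1, eta_mod8 a2 o2, eta_mod8 a3 o3]
  exact key δ2 δ3 hδ2 hδ3 hδ μ α β hμ hα hβ hsum
    ⟨a1 % 8, by omega⟩ ⟨a2 % 8, by omega⟩ ⟨a3 % 8, by omega⟩
    (by show a1 % 8 % 2 = 1; omega) (by show a2 % 8 % 2 = 1; omega)
    (by show a3 % 8 % 2 = 1; omega)
end

section
/- One has the identity of convergent infinite products: 1728 · (3/16)^3 · c(1)^3 · (∏_{p prime, p > 2} (1 − 3/(p+2)^2 + 2/(p+2)^3)) · (∏_{p prime, p > 2} (1 − 1/p^2)) = (27/8) · ∏_{p prime, p > 2} (1 − 1/p)^4 · (1 + 4/p). -/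
open Finset

/-- `c(r) = (∏_{p ∣ r} (p+1)/(p+2)) · ∏_p (1 - 2/(p(p+1)))`. -/
noncomputable def cconst (r : ℕ) : ℝ :=
  (∏ p ∈ r.primeFactors, (((p : ℝ) + 1) / ((p : ℝ) + 2))) *
    ∏' p : Nat.Primes, (1 - 2 / (((p : ℕ) : ℝ) * (((p : ℕ) : ℝ) + 1)))

namespace LCIaux

lemma abs_log_le {x : ℝ} (hx : 1 / 2 ≤ x) : |Real.log x| ≤ 2 * |x - 1| := by
  have hx0 : (0 : ℝ) < x := by linarith
  rcases le_or_gt 1 x with h | h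
  · rw [abs_of_nonneg (Real.log_nonneg h), abs_of_nonneg (by linarith)]
    have := Real.log_le_sub_one_of_pos hx0
    linarith
  · rw [abs_of_nonpos (Real.log_nonpos (by linarith) h.le), abs_of_neg (by linarith)]
    have h2 := Real.log_le_sub_one_of_pos (inv_pos.2 hx0)
    rw [Real.log_inv] at h2
    have hinv : x⁻¹ ≤ 3 - 2 * x := by
      rw [inv_le_iff_one_le_mul₀ hx0]
      nlinarith
    linarith

lemma summable_log {ι : Type*} {f : ι → ℝ} (h1 : ∀ i, 1 / 2 ≤ f i)
    (h2 : Summable fun i => |f i - 1|) : Summable fun i => Real.log (f i) := by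
  apply Summable.of_abs
  exact Summable.of_nonneg_of_le (fun i => abs_nonneg _)
    (fun i => abs_log_le (h1 i)) (h2.mul_left 2)

lemma multipliable_of_bound {S : Type*} (v : S → ℕ) (hinj : Function.Injective v)
    {f : S → ℝ} (c : ℝ) (hpos : ∀ s, 1 / 2 ≤ f s)
    (hb : ∀ s, |f s - 1| ≤ c / ((v s : ℝ)) ^ 2) : Multipliable f := by
  have hs0 : Summable (fun n : ℕ => c / (n : ℝ) ^ 2) := by
    have := (Real.summable_one_div_nat_pow.mpr (by norm_num : 1 < 2)).mul_left c
    simpa [div_eq_mul_inv, mul_comm] using this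
  have hs : Summable (fun s : S => c / ((v s : ℝ)) ^ 2) := hs0.comp_injective hinj
  have h2 : Summable fun s => |f s - 1| :=
    Summable.of_nonneg_of_le (fun s => abs_nonneg _) hb hs
  exact Real.multipliable_of_summable_log
    (fun s => by linarith [hpos s]) (summable_log hpos h2)

/-- The function `p ↦ 1 - 2/(p(p+1))` on primes. -/
noncomputable def FP : Nat.Primes → ℝ :=
  fun p => 1 - 2 / (((p : ℕ) : ℝ) * (((p : ℕ) : ℝ) + 1))

/-- Same function, on odd primes. -/
noncomputable def FS : {p : ℕ // p.Prime ∧ 2 < p} → ℝ :=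
  fun s => 1 - 2 / (((s : ℕ) : ℝ) * (((s : ℕ) : ℝ) + 1))

noncomputable def AS : {p : ℕ // p.Prime ∧ 2 < p} → ℝ :=
  fun s => 1 - 3 / (((s : ℕ) : ℝ) + 2) ^ 2 + 2 / (((s : ℕ) : ℝ) + 2) ^ 3

noncomputable def BS : {p : ℕ // p.Prime ∧ 2 < p} → ℝ :=
  fun s => 1 - 1 / ((s : ℕ) : ℝ) ^ 2

lemma f_pos_of_two_le {x : ℝ} (hx : 2 ≤ x) : 1 / 2 ≤ 1 - 2 / (x * (x + 1)) := by
  have hx0 : 0 < x * (x + 1) := by nlinarith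
  have : 2 / (x * (x + 1)) ≤ 1 / 2 := by
    rw [div_le_div_iff₀ hx0 (by norm_num)]; nlinarith
  linarith

lemma f_bound_of_two_le {x : ℝ} (hx : 2 ≤ x) :
    |1 - 2 / (x * (x + 1)) - 1| ≤ 2 / x ^ 2 := by
  have hx0 : 0 < x * (x + 1) := by nlinarith
  have hx2 : (0 : ℝ) < x ^ 2 := by nlinarith
  rw [show (1 : ℝ) - 2 / (x * (x + 1)) - 1 = -(2 / (x * (x + 1))) by ring, abs_neg,
    abs_of_nonneg (by positivity), div_le_div_iff₀ hx0 hx2]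
  nlinarith

lemma hFP : Multipliable FP := by
  apply multipliable_of_bound (fun p : Nat.Primes => (p : ℕ)) (fun a b h => Subtype.ext h) 2
  · intro p
    exact f_pos_of_two_le (by exact_mod_cast p.2.two_le)
  · intro p
    exact f_bound_of_two_le (by exact_mod_cast p.2.two_le)

lemma hFS : Multipliable FS := by
  apply multipliable_of_bound (fun s : {p : ℕ // p.Prime ∧ 2 < p} => (s : ℕ))
    (fun a b h => Subtype.ext h) 2
  · intro s
    exact f_pos_of_two_le (by exact_mod_cast s.2.1.two_le)
  · intro s
    exact f_bound_of_two_le (by exact_mod_cast s.2.1.two_le)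

lemma hAS : Multipliable AS := by
  apply multipliable_of_bound (fun s : {p : ℕ // p.Prime ∧ 2 < p} => (s : ℕ))
    (fun a b h => Subtype.ext h) 5
  · intro s
    have hx : (3 : ℝ) ≤ ((s : ℕ) : ℝ) := by exact_mod_cast s.2.2
    set x := ((s : ℕ) : ℝ)
    have h2 : (0 : ℝ) < (x + 2) ^ 2 := by positivity
    have e2 : 3 / (x + 2) ^ 2 ≤ 1 / 2 := by
      rw [div_le_div_iff₀ h2 (by norm_num)]; nlinarith
    have e3 : 0 ≤ 2 / (x + 2) ^ 3 := by positivity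
    show 1 / 2 ≤ 1 - 3 / (x + 2) ^ 2 + 2 / (x + 2) ^ 3
    linarith
  · intro s
    have hx : (3 : ℝ) ≤ ((s : ℕ) : ℝ) := by exact_mod_cast s.2.2
    set x := ((s : ℕ) : ℝ)
    have hx0 : (0 : ℝ) < x := by linarith
    have h2 : (0 : ℝ) < (x + 2) ^ 2 := by positivity
    have h3 : (0 : ℝ) < (x + 2) ^ 3 := by positivity
    have hx2 : (0 : ℝ) < x ^ 2 := by positivity
    show |1 - 3 / (x + 2) ^ 2 + 2 / (x + 2) ^ 3 - 1| ≤ 5 / x ^ 2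
    have habs : |1 - 3 / (x + 2) ^ 2 + 2 / (x + 2) ^ 3 - 1|
        ≤ 3 / (x + 2) ^ 2 + 2 / (x + 2) ^ 3 := by
      rw [show (1:ℝ) - 3 / (x + 2) ^ 2 + 2 / (x + 2) ^ 3 - 1
        = 2 / (x + 2) ^ 3 - 3 / (x + 2) ^ 2 by ring]
      calc |2 / (x + 2) ^ 3 - 3 / (x + 2) ^ 2| ≤ |2 / (x + 2) ^ 3| + |3 / (x + 2) ^ 2| :=
            abs_sub _ _
        _ = 2 / (x + 2) ^ 3 + 3 / (x + 2) ^ 2 := by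
            rw [abs_of_nonneg (by positivity), abs_of_nonneg (by positivity)]
        _ = 3 / (x + 2) ^ 2 + 2 / (x + 2) ^ 3 := by ring
    refine habs.trans ?_
    have b1 : 3 / (x + 2) ^ 2 ≤ 3 / x ^ 2 := by
      rw [div_le_div_iff₀ h2 hx2]; nlinarith
    have b2 : 2 / (x + 2) ^ 3 ≤ 2 / x ^ 2 := by
      rw [div_le_div_iff₀ h3 hx2]; nlinarith
    have b3 : 3 / x ^ 2 + 2 / x ^ 2 = 5 / x ^ 2 := by ring
    linarith

lemma hBS : Multipliable BS := by
  apply multipliable_of_bound (fun s : {p : ℕ // p.Prime ∧ 2 < p} => (s : ℕ))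
    (fun a b h => Subtype.ext h) 1
  · intro s
    have hx : (3 : ℝ) ≤ ((s : ℕ) : ℝ) := by exact_mod_cast s.2.2
    set x := ((s : ℕ) : ℝ)
    have hx2 : (0 : ℝ) < x ^ 2 := by nlinarith
    have : 1 / x ^ 2 ≤ 1 / 2 := by rw [div_le_div_iff₀ hx2 (by norm_num)]; nlinarith
    show 1 / 2 ≤ 1 - 1 / x ^ 2
    linarith
  · intro s
    have hx : (3 : ℝ) ≤ ((s : ℕ) : ℝ) := by exact_mod_cast s.2.2
    set x := ((s : ℕ) : ℝ)
    have hx2 : (0 : ℝ) < x ^ 2 := by nlinarith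
    show |1 - 1 / x ^ 2 - 1| ≤ 1 / x ^ 2
    rw [show (1 : ℝ) - 1 / x ^ 2 - 1 = -(1 / x ^ 2) by ring, abs_neg,
      abs_of_nonneg (by positivity)]

/-- The element `2` of `Nat.Primes`. -/
def two' : Nat.Primes := ⟨2, Nat.prime_two⟩

/-- Odd primes are equivalent to the complement of `{2}` in the primes. -/
noncomputable def oddPrimesEquiv :
    {p : ℕ // p.Prime ∧ 2 < p} ≃ (({two'} : Set Nat.Primes)ᶜ : Set Nat.Primes) where
  toFun s := ⟨⟨(s : ℕ), s.2.1⟩, by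
    show ¬ ((⟨(s : ℕ), s.2.1⟩ : Nat.Primes) = two')
    intro h
    have : (s : ℕ) = 2 := congrArg (fun p : Nat.Primes => (p : ℕ)) h
    have := s.2.2
    omega⟩
  invFun p := ⟨((p : Nat.Primes) : ℕ), ⟨(p : Nat.Primes).2, by
    have h2 := (p : Nat.Primes).2.two_le
    rcases lt_or_eq_of_le h2 with h | h
    · exact h
    · exfalso
      exact p.2 (Subtype.ext h.symm)⟩⟩
  left_inv s := by ext; rfl
  right_inv p := by ext; rfl

lemma split_FP : (∏' p : Nat.Primes, FP p) = 2 / 3 * ∏' s, FS s := by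
  have hsing : Multipliable (FP ∘ (↑) : ({two'} : Set Nat.Primes) → ℝ) := by
    haveI : Fintype ({two'} : Set Nat.Primes) := Set.fintypeSingleton _
    exact ⟨_, hasProd_fintype _⟩
  have hcompl0 : (fun p : (({two'} : Set Nat.Primes)ᶜ : Set Nat.Primes) => FS (oddPrimesEquiv.symm p))
      = (FP ∘ (↑) : (({two'} : Set Nat.Primes)ᶜ : Set Nat.Primes) → ℝ) := by
    funext p
    rfl
  have hcompl : Multipliable (FP ∘ (↑) : (({two'} : Set Nat.Primes)ᶜ : Set Nat.Primes) → ℝ) := by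
    rw [← hcompl0]
    exact (Equiv.multipliable_iff (f := FS) oddPrimesEquiv.symm).mpr hFS
  have h := Multipliable.tprod_mul_tprod_compl (f := FP) hsing hcompl
  rw [← h]
  have h1 : (∏' x : ({two'} : Set Nat.Primes), FP x) = FP two' := tprod_singleton two' FP
  have h2 : FP two' = 2 / 3 := by
    show (1 : ℝ) - 2 / (((2 : ℕ) : ℝ) * (((2 : ℕ) : ℝ) + 1)) = 2 / 3
    norm_num
  have h3 : (∏' x : (({two'} : Set Nat.Primes)ᶜ : Set Nat.Primes), FP x) = ∏' s, FS s := by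
    rw [← Equiv.tprod_eq (f := fun x : (({two'} : Set Nat.Primes)ᶜ : Set Nat.Primes) => FP x)
      oddPrimesEquiv]
    exact tprod_congr fun s => rfl
  rw [h1, h2, h3]

end LCIaux

open LCIaux in
theorem leading_constant_identity :
    1728 * (3 / 16 : ℝ) ^ 3 * cconst 1 ^ 3 *
        (∏' p : {p : ℕ // p.Prime ∧ 2 < p},
          (1 - 3 / (((p : ℕ) : ℝ) + 2) ^ 2 + 2 / (((p : ℕ) : ℝ) + 2) ^ 3)) *
        (∏' p : {p : ℕ // p.Prime ∧ 2 < p}, (1 - 1 / ((p : ℕ) : ℝ) ^ 2)) =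
      27 / 8 * ∏' p : {p : ℕ // p.Prime ∧ 2 < p},
        ((1 - 1 / ((p : ℕ) : ℝ)) ^ 4 * (1 + 4 / ((p : ℕ) : ℝ))) := by
  have hc : cconst 1 = 2 / 3 * ∏' s, FS s := by
    rw [← split_FP]
    simp [cconst, FP]
  have hkey : (∏' s : {p : ℕ // p.Prime ∧ 2 < p},
        ((1 - 1 / ((s : ℕ) : ℝ)) ^ 4 * (1 + 4 / ((s : ℕ) : ℝ))))
      = (∏' s, FS s) * ((∏' s, FS s) * ((∏' s, FS s) *
        ((∏' s, AS s) * (∏' s, BS s)))) := by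
    rw [← Multipliable.tprod_mul hAS hBS, ← Multipliable.tprod_mul hFS (hAS.mul hBS), ← Multipliable.tprod_mul hFS (hFS.mul (hAS.mul hBS)),
      ← Multipliable.tprod_mul hFS (hFS.mul (hFS.mul (hAS.mul hBS)))]
    apply tprod_congr
    intro s
    have hx : (3 : ℝ) ≤ ((s : ℕ) : ℝ) := by exact_mod_cast s.2.2
    set x := ((s : ℕ) : ℝ)
    have hx0 : x ≠ 0 := by intro h; rw [h] at hx; norm_num at hx
    have hx1 : x + 1 ≠ 0 := by intro h; nlinarith [hx]
    have hx2 : x + 2 ≠ 0 := by intro h; nlinarith [hx]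
    show (1 - 1 / x) ^ 4 * (1 + 4 / x)
      = (1 - 2 / (x * (x + 1))) * ((1 - 2 / (x * (x + 1))) * ((1 - 2 / (x * (x + 1))) *
        ((1 - 3 / (x + 2) ^ 2 + 2 / (x + 2) ^ 3) * (1 - 1 / x ^ 2))))
    field_simp
    ring
  rw [hc]
  rw [show (∏' p : {p : ℕ // p.Prime ∧ 2 < p},
      (1 - 3 / (((p : ℕ) : ℝ) + 2) ^ 2 + 2 / (((p : ℕ) : ℝ) + 2) ^ 3)) = ∏' s, AS s from rfl]
  rw [show (∏' p : {p : ℕ // p.Prime ∧ 2 < p}, (1 - 1 / ((p : ℕ) : ℝ) ^ 2)) = ∏' s, BS s from rfl]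
  rw [hkey]
  ring
end
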